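/- Let E be an elliptic curve over a perfect field K, p an odd prime invertible in K, X a torsor under E[p], and F̄ = Map(X, K̄). For fixed x₀ ∈ X and P ∈ E[p], the map φ_{P,x₀} : X → μ_p given by x ↦ e_p(P, x − x₀) is affine; its class in μ_p(F̄)/μ_p (maps to μ_p modulo constant maps) is independent of x₀; and the resulting assignment E[p] → μ_p(F̄)/μ_p is an injective group homomorphism. -/
import Mathlib


/-- A map `φ : X → μ` from a torsor `X` under `Ep` to a commutative group `μ` is affine if
it satisfies the (multiplicative) parallelogram condition. -/
def IsAffMul {Ep X μ : Type*} [AddGroup Ep] [AddTorsor Ep X] [CommGroup μ]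
    (φ : X → μ) : Prop :=
  ∀ (x : X) (P Q : Ep), φ ((P + Q) +ᵥ x) * φ x = φ (P +ᵥ x) * φ (Q +ᵥ x)

/-- Let `E` be an elliptic curve over a perfect field `K`, `p` an odd
prime invertible in `K`, `X` a torsor under `E[p]`, and `F̄ = Map(X, K̄)` with
`μ_p(F̄) = Map(X, μ_p)`.  For fixed `x₀ ∈ X` and `P ∈ E[p]`, the map
`φ_{P,x₀} : X → μ_p`, `x ↦ e_p(P, x − x₀)`, is affine; its class in `μ_p(F̄)/μ_p`
(maps modulo constant maps) is independent of `x₀`; and the resulting assignment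
`E[p] → μ_p(F̄)/μ_p` is an injective group homomorphism.

Setup: `Ep = E[p]`, `μ = μ_p`, `X` a torsor under `Ep`; `x −ᵥ x₀ ∈ Ep` is the torsor
difference; `e` is the Weil pairing, bilinear and nondegenerate. -/
theorem statement14 {Ep X μ : Type*}
    [AddCommGroup Ep] [AddTorsor Ep X] [CommGroup μ]
    (p : ℕ) (hp : p.Prime) (hodd : Odd p)
    (htorEp : ∀ P : Ep, p • P = 0) (htorμ : ∀ c : μ, c ^ p = 1)
    (e : Ep → Ep → μ)
    (hbil₁ : ∀ a b c : Ep, e (a + b) c = e a c * e b c)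
    (hbil₂ : ∀ a b c : Ep, e a (b + c) = e a b * e a c)
    (hnd : ∀ P : Ep, (∀ Q : Ep, e P Q = 1) → P = 0) :
    -- `φ_{P,x₀}` is affine
    (∀ (P : Ep) (x₀ : X), IsAffMul fun x : X => e P (x -ᵥ x₀)) ∧
    -- its class modulo constant maps does not depend on `x₀`
    (∀ (P : Ep) (x₀ x₁ : X), ∃ c : μ, ∀ x : X, e P (x -ᵥ x₀) = c * e P (x -ᵥ x₁)) ∧
    -- the assignment `E[p] → μ_p(F̄)/μ_p` is a group homomorphism ...
    (∀ (P Q : Ep) (x₀ : X), ∃ c : μ, ∀ x : X,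
      e (P + Q) (x -ᵥ x₀) = c * (e P (x -ᵥ x₀) * e Q (x -ᵥ x₀))) ∧
    -- ... and it is injective
    (∀ (P Q : Ep) (x₀ : X),
      (∃ c : μ, ∀ x : X, e P (x -ᵥ x₀) = c * e Q (x -ᵥ x₀)) → P = Q) := by
  have hzero : ∀ a : Ep, e a 0 = 1 := by
    intro a
    have h := hbil₂ a 0 0
    simpa using h.symm
  refine ⟨?_, ?_, ?_, ?_⟩
  · intro P x₀ x Q R
    simp only [vadd_vsub_assoc, hbil₂]
    ac_rfl
  · intro P x₀ x₁
    refine ⟨e P (x₁ -ᵥ x₀), fun x => ?_⟩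
    have h : x -ᵥ x₀ = (x₁ -ᵥ x₀) + (x -ᵥ x₁) := by
      rw [add_comm, vsub_add_vsub_cancel]
    rw [h, hbil₂]
  · intro P Q x₀
    exact ⟨1, fun x => by rw [hbil₁, one_mul]⟩
  · intro P Q x₀ ⟨c, hc⟩
    have hc1 : c = 1 := by
      have := hc x₀
      simp [vsub_self, hzero] at this
      exact this.symm
    have key : ∀ R : Ep, e (P - Q) R = 1 := by
      intro R
      have h := hc (R +ᵥ x₀)
      rw [hc1, one_mul, vadd_vsub] at h
      have := hbil₁ (P - Q) Q R
      rw [sub_add_cancel, h] at this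
      have := mul_right_cancel (a := e (P - Q) R) (b := e Q R) (c := 1)
        (by rw [one_mul]; exact this.symm)
      exact this
    have := hnd (P - Q) key
    exact sub_eq_zero.mp this
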